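/- Let p be an odd prime. For ε1, ε2 ∈ {−1,1} with ε1 ≠ ε2, the number of pairs (b,c) mod p with Legendre symbol ((b^2+4c)/p) = ε1 and ((−c)/p) = ε2 is exactly (p−1)^2/4. -/

import Mathlib

open Finset

section Aux

variable {p : ℕ} [Fact p.Prime]

private lemma aux_ringChar (hodd : Odd p) : ringChar (ZMod p) ≠ 2 := by
  rw [ZMod.ringChar_zmod_n]
  rintro rfl
  exact (Nat.not_odd_iff_even.mpr (by norm_num)) hodd

/-- indicator identity: 2·#{x : χ (f x) = ε} = ∑ (χ(f x)² + ε·χ(f x)) -/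
private lemma aux_indicator (ε : ℤ) (hε : ε = -1 ∨ ε = 1) (f : ZMod p → ZMod p) :
    2 * ((univ.filter fun x => quadraticChar (ZMod p) (f x) = ε).card : ℤ) =
      ∑ x : ZMod p,
        ((quadraticChar (ZMod p) (f x)) ^ 2 + ε * quadraticChar (ZMod p) (f x)) := by
  rw [card_filter]
  push_cast
  rw [Finset.mul_sum]
  refine Finset.sum_congr rfl fun x _ => ?_
  rcases quadraticChar_isQuadratic (ZMod p) (f x) with h | h | h <;>
    rw [h] <;> rcases hε with rfl | rfl <;> norm_num

private lemma aux_sum_sq (f : ZMod p → ZMod p) :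
    ∑ x : ZMod p, (quadraticChar (ZMod p) (f x)) ^ 2 =
      ((univ.filter fun x => ¬ f x = 0).card : ℤ) := by
  rw [card_filter]
  push_cast
  refine Finset.sum_congr rfl fun x _ => ?_
  by_cases h : f x = 0
  · rw [if_neg (not_not_intro h), h, quadraticChar_zero]
    norm_num
  · rw [if_pos h, quadraticChar_sq_one h]

/-- the number of x with x^2 = a, as an integer -/
private lemma aux_card_sqrts (hodd : Odd p) (a : ZMod p) :
    ((univ.filter fun x : ZMod p => x ^ 2 = a).card : ℤ) =
      quadraticChar (ZMod p) a + 1 := by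
  have h := quadraticChar_card_sqrts (aux_ringChar hodd) a
  rwa [show ({x : ZMod p | x ^ 2 = a}.toFinset) = univ.filter (fun x => x ^ 2 = a) by
    ext x; simp] at h

/-- shifted quadratic character sum : ∑ χ(t) χ(t+a) = -1 for a ≠ 0 -/
private lemma aux_shift_sum (hodd : Odd p) {a : ZMod p} (ha : a ≠ 0) :
    ∑ t : ZMod p, quadraticChar (ZMod p) t * quadraticChar (ZMod p) (t + a) = -1 := by
  classical
  have h0 : ∑ t : ZMod p, quadraticChar (ZMod p) t * quadraticChar (ZMod p) (t + a)
      = ∑ t ∈ univ.filter (· ≠ 0),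
          quadraticChar (ZMod p) t * quadraticChar (ZMod p) (t + a) :=
    (Finset.sum_filter_of_ne (fun t _ h => by
      intro ht
      exact h (by rw [ht, quadraticChar_zero, zero_mul]))).symm
  have h1 : ∑ t ∈ univ.filter (· ≠ 0),
      quadraticChar (ZMod p) t * quadraticChar (ZMod p) (t + a)
      = ∑ u ∈ univ.filter (· ≠ 1), quadraticChar (ZMod p) u := by
    refine Finset.sum_nbij' (i := fun t => 1 + a * t⁻¹) (j := fun u => a * (u - 1)⁻¹)
      ?_ ?_ ?_ ?_ ?_
    · intro t ht
      simp only [mem_filter, mem_univ, true_and] at ht ⊢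
      intro h
      have h' : a * t⁻¹ = 0 := by linear_combination h
      rcases mul_eq_zero.mp h' with h'' | h''
      · exact ha h''
      · exact ht (inv_eq_zero.mp h'')
    · intro u hu
      simp only [mem_filter, mem_univ, true_and] at hu ⊢
      intro h
      rcases mul_eq_zero.mp h with h' | h'
      · exact ha h'
      · exact absurd h' (inv_ne_zero (sub_ne_zero.mpr hu))
    · intro t ht
      simp only [mem_filter, mem_univ, true_and] at ht
      field_simp
      simp [ha]
    · intro u hu
      simp only [mem_filter, mem_univ, true_and] at hu
      have h1 : u - 1 ≠ 0 := sub_ne_zero.mpr hu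
      field_simp
      ring
    · intro t ht
      simp only [mem_filter, mem_univ, true_and] at ht
      rw [← map_mul]
      have key : t * (t + a) = t ^ 2 * (1 + a * t⁻¹) := by
        field_simp
      rw [key, map_mul, quadraticChar_sq_one' ht, one_mul]
  have h2 : ∑ u ∈ univ.filter (· ≠ 1), quadraticChar (ZMod p) u = -1 := by
    have hz := quadraticChar_sum_zero (F := ZMod p) (aux_ringChar hodd)
    rw [show (univ.filter (· ≠ (1 : ZMod p))) = univ.erase 1 by
      ext x; simp [Finset.mem_erase]]
    rw [Finset.sum_erase_eq_sub (Finset.mem_univ 1), hz, map_one]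
    norm_num
  rw [h0, h1, h2]

/-- ∑ χ(x² + a) = -1 for a ≠ 0 -/
private lemma aux_quad_sum (hodd : Odd p) {a : ZMod p} (ha : a ≠ 0) :
    ∑ x : ZMod p, quadraticChar (ZMod p) (x ^ 2 + a) = -1 := by
  classical
  have hfib : ∑ x : ZMod p, quadraticChar (ZMod p) (x ^ 2 + a)
      = ∑ t : ZMod p, ∑ x ∈ univ.filter (fun x => x ^ 2 = t),
          quadraticChar (ZMod p) (x ^ 2 + a) :=
    (Finset.sum_fiberwise_of_maps_to (fun x _ => Finset.mem_univ _) _).symm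
  have hinner : ∀ t : ZMod p,
      ∑ x ∈ univ.filter (fun x => x ^ 2 = t), quadraticChar (ZMod p) (x ^ 2 + a)
      = (quadraticChar (ZMod p) t + 1) * quadraticChar (ZMod p) (t + a) := by
    intro t
    have hc : ∑ x ∈ univ.filter (fun x => x ^ 2 = t), quadraticChar (ZMod p) (x ^ 2 + a)
        = ∑ _x ∈ univ.filter (fun x : ZMod p => x ^ 2 = t),
            quadraticChar (ZMod p) (t + a) := by
      refine Finset.sum_congr rfl fun x hx => ?_
      rw [(Finset.mem_filter.mp hx).2]
    rw [hc, Finset.sum_const, nsmul_eq_mul, aux_card_sqrts hodd]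
  rw [hfib]
  simp_rw [hinner]
  have expand : ∑ t : ZMod p,
      (quadraticChar (ZMod p) t + 1) * quadraticChar (ZMod p) (t + a)
      = (∑ t : ZMod p, quadraticChar (ZMod p) t * quadraticChar (ZMod p) (t + a))
        + ∑ t : ZMod p, quadraticChar (ZMod p) (t + a) := by
    rw [← Finset.sum_add_distrib]
    exact Finset.sum_congr rfl fun t _ => by ring
  have hshiftzero : ∑ t : ZMod p, quadraticChar (ZMod p) (t + a) = 0 := by
    have he : ∑ t : ZMod p, quadraticChar (ZMod p) (t + a)
        = ∑ u : ZMod p, quadraticChar (ZMod p) u :=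
      Fintype.sum_equiv (Equiv.addRight a) _ _ (fun t => rfl)
    rw [he]
    exact quadraticChar_sum_zero (aux_ringChar hodd)
  rw [expand, aux_shift_sum hodd ha, hshiftzero, add_zero]

/-- counting lemma: if χ(-a) = -ε, ε = ±1, then #{x : χ(x²+a) = ε} = (p-1)/2 -/
private lemma aux_quad_count (hodd : Odd p) (ε : ℤ) (hε : ε = -1 ∨ ε = 1) {a : ZMod p}
    (ha : quadraticChar (ZMod p) (-a) = -ε) :
    (univ.filter fun x : ZMod p => quadraticChar (ZMod p) (x ^ 2 + a) = ε).card
      = (p - 1) / 2 := by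
  have ha0 : a ≠ 0 := by
    rintro rfl
    rw [neg_zero, quadraticChar_zero] at ha
    rcases hε with rfl | rfl <;> norm_num at ha
  have hind := aux_indicator (p := p) ε hε (fun x => x ^ 2 + a)
  rw [Finset.sum_add_distrib, ← Finset.mul_sum, aux_sum_sq, aux_quad_sum hodd ha0] at hind
  have hsplit := Finset.card_filter_add_card_filter_not
    (s := (univ : Finset (ZMod p))) (p := fun x => x ^ 2 + a = 0)
  have huniv : (univ : Finset (ZMod p)).card = p := by
    rw [Finset.card_univ, ZMod.card]
  have heq : (univ.filter fun x : ZMod p => x ^ 2 + a = 0)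
      = (univ.filter fun x : ZMod p => x ^ 2 = -a) := by
    ext x; simp [eq_neg_iff_add_eq_zero]
  rw [heq, huniv] at hsplit
  have hns := aux_card_sqrts hodd (-a)
  rw [ha] at hns
  have hp1 : 1 ≤ p := (Fact.out : p.Prime).one_lt.le
  rcases hε with rfl | rfl <;> omega

/-- counting lemma: #{c : χ(-c) = ε} = (p-1)/2 for ε = ±1 -/
private lemma aux_lin_count (hodd : Odd p) (ε : ℤ) (hε : ε = -1 ∨ ε = 1) :
    (univ.filter fun c : ZMod p => quadraticChar (ZMod p) (-c) = ε).card
      = (p - 1) / 2 := by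
  have hind := aux_indicator (p := p) ε hε (fun c => -c)
  rw [Finset.sum_add_distrib, ← Finset.mul_sum, aux_sum_sq] at hind
  have hzero : ∑ c : ZMod p, quadraticChar (ZMod p) (-c) = 0 := by
    have he : ∑ c : ZMod p, quadraticChar (ZMod p) (-c)
        = ∑ u : ZMod p, quadraticChar (ZMod p) u :=
      Fintype.sum_equiv (Equiv.neg (ZMod p)) _ _ (fun c => rfl)
    rw [he]
    exact quadraticChar_sum_zero (aux_ringChar hodd)
  rw [hzero, mul_zero, add_zero] at hind
  have hcard : (univ.filter fun c : ZMod p => ¬ -c = 0).card = p - 1 := by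
    rw [show (univ.filter fun c : ZMod p => ¬ -c = 0) = univ.erase 0 by
      ext x; simp [Finset.mem_erase, neg_eq_zero]]
    rw [Finset.card_erase_of_mem (Finset.mem_univ 0), Finset.card_univ, ZMod.card]
  rw [hcard] at hind
  have hp1 : 1 ≤ p := (Fact.out : p.Prime).one_lt.le
  omega

end Aux

theorem stmt_2 (p : ℕ) [Fact p.Prime] (hodd : Odd p) (ε₁ ε₂ : ℤ)
    (h₁ : ε₁ = -1 ∨ ε₁ = 1) (h₂ : ε₂ = -1 ∨ ε₂ = 1) (hne : ε₁ ≠ ε₂) :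
    ((Finset.univ : Finset (ZMod p × ZMod p)).filter
      (fun bc => quadraticChar (ZMod p) (bc.1 ^ 2 + 4 * bc.2) = ε₁ ∧
        quadraticChar (ZMod p) (-bc.2) = ε₂)).card = (p - 1) ^ 2 / 4 := by
  classical
  have hε2 : ε₂ = -ε₁ := by
    rcases h₁ with rfl | rfl <;> rcases h₂ with rfl | rfl <;> simp_all
  have h4 : quadraticChar (ZMod p) 4 = 1 := by
    have h2 : (2 : ZMod p) ≠ 0 := Ring.two_ne_zero (aux_ringChar hodd)
    rw [show (4 : ZMod p) = 2 ^ 2 by norm_num]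
    exact quadraticChar_sq_one' h2
  rw [Finset.card_filter, Fintype.sum_prod_type, Finset.sum_comm]
  have hswap : ∀ c : ZMod p,
      (∑ b : ZMod p, if quadraticChar (ZMod p) ((b, c).1 ^ 2 + 4 * (b, c).2) = ε₁ ∧
          quadraticChar (ZMod p) (-(b, c).2) = ε₂ then 1 else 0)
      = if quadraticChar (ZMod p) (-c) = ε₂ then
          (univ.filter fun b : ZMod p =>
            quadraticChar (ZMod p) (b ^ 2 + 4 * c) = ε₁).card else 0 := by
    intro c
    show (∑ b : ZMod p, if quadraticChar (ZMod p) (b ^ 2 + 4 * c) = ε₁ ∧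
        quadraticChar (ZMod p) (-c) = ε₂ then 1 else 0) = _
    by_cases h : quadraticChar (ZMod p) (-c) = ε₂
    · rw [if_pos h, Finset.card_filter]
      exact Finset.sum_congr rfl fun b _ => by simp only [h, and_true]
    · rw [if_neg h]
      exact Finset.sum_eq_zero fun b _ => by
        rw [if_neg]; exact fun hab => h hab.2
  simp_rw [hswap]
  rw [← Finset.sum_filter]
  have hcsum : ∀ c ∈ univ.filter (fun c : ZMod p => quadraticChar (ZMod p) (-c) = ε₂),
      (univ.filter fun b : ZMod p =>
        quadraticChar (ZMod p) (b ^ 2 + 4 * c) = ε₁).card = (p - 1) / 2 := by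
    intro c hc
    have hc' : quadraticChar (ZMod p) (-c) = ε₂ := (Finset.mem_filter.mp hc).2
    have key : quadraticChar (ZMod p) (-(4 * c)) = -ε₁ := by
      rw [show (-(4 * c) : ZMod p) = 4 * (-c) by ring, map_mul, h4, one_mul, hc', hε2]
    have := aux_quad_count hodd ε₁ h₁ key
    convert this using 2
  rw [Finset.sum_congr rfl hcsum, Finset.sum_const, smul_eq_mul,
    aux_lin_count hodd ε₂ h₂]
  obtain ⟨k, hk⟩ := hodd
  have hpk : p - 1 = 2 * k := by omega
  rw [hpk, Nat.mul_div_cancel_left _ (by norm_num : 0 < 2),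
    show (2 * k) ^ 2 = 4 * (k * k) by ring,
    Nat.mul_div_cancel_left _ (by norm_num : 0 < 4)]
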